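/- Let n be a natural number with n ≡ 5 (mod 8). For 0 ≤ k ≤ ⌊n/2⌋ define the rational numbers c_k = (−1)^(⌊k/2⌋ + 1) · (n + 1 − 2k)^(k mod 2) · (∏_{λ=1}^{⌊k/2⌋} ((n+1)² − (4λ−2)²)) / (4^k · k!) (the product being empty, hence 1, when ⌊k/2⌋ = 0). Then every c_k is an integer, and for all complex numbers x, y: x^n + y^n = (x + y) · ∑_{k=0}^{⌊n/2⌋} c_k · (x·y)^(⌊n/2⌋ − k) · (x² + y²)^k. -/

import Mathlib

/-- Coefficients of `(x^(2j+1)+y^(2j+1))/(x+y)` in terms of `xy` and `x^2+y^2`. -/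
def elA (j k : ℕ) : ℤ := (-1) ^ ((j + 1 - k) / 2) * ((j + k) / 2).choose k

lemma elA_zero (j : ℕ) : elA (j + 2) 0 = - elA j 0 := by
  unfold elA
  rw [show (j + 2 + 1 - 0) / 2 = (j + 1 - 0) / 2 + 1 by omega,
      show (j + 2 + 0) / 2 = (j + 0) / 2 + 1 by omega]
  simp [pow_succ]

lemma elA_big {j k : ℕ} (h : j < k) : elA j k = 0 := by
  unfold elA
  rw [Nat.choose_eq_zero_of_lt (by omega)]
  ring

lemma elA_rec (j k : ℕ) : elA (j + 2) (k + 1) = elA (j + 1) k - elA j (k + 1) := by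
  rcases le_or_gt (k + 1) j with h | h
  · rcases Nat.even_or_odd (j + k) with he | ho
    · obtain ⟨u, rfl⟩ : ∃ u, j = k + 2 * u + 2 := by
        obtain ⟨s, hs⟩ := he; exact ⟨(j - k) / 2 - 1, by omega⟩
      unfold elA
      rw [show (k + 2 * u + 2 + 2 + 1 - (k + 1)) / 2 = u + 2 by omega,
          show (k + 2 * u + 2 + 1 + 1 - k) / 2 = u + 2 by omega,
          show (k + 2 * u + 2 + 1 - (k + 1)) / 2 = u + 1 by omega,
          show (k + 2 * u + 2 + 2 + (k + 1)) / 2 = (k + u + 1) + 1 by omega,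
          show (k + 2 * u + 2 + 1 + k) / 2 = k + u + 1 by omega,
          show (k + 2 * u + 2 + (k + 1)) / 2 = k + u + 1 by omega,
          Nat.choose_succ_succ' (k + u + 1) k]
      push_cast
      ring
    · obtain ⟨u, rfl⟩ : ∃ u, j = k + 2 * u + 1 := by
        obtain ⟨s, hs⟩ := ho; exact ⟨(j - k) / 2, by omega⟩
      unfold elA
      rw [show (k + 2 * u + 1 + 2 + 1 - (k + 1)) / 2 = u + 1 by omega,
          show (k + 2 * u + 1 + 1 + 1 - k) / 2 = u + 1 by omega,
          show (k + 2 * u + 1 + 1 - (k + 1)) / 2 = u by omega,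
          show (k + 2 * u + 1 + 2 + (k + 1)) / 2 = (k + u + 1) + 1 by omega,
          show (k + 2 * u + 1 + 1 + k) / 2 = k + u + 1 by omega,
          show (k + 2 * u + 1 + (k + 1)) / 2 = k + u + 1 by omega,
          Nat.choose_succ_succ' (k + u + 1) k]
      push_cast
      ring
  · rcases eq_or_lt_of_le (Nat.lt_iff_add_one_le.mp h) with hk | hk
    · -- k = j
      obtain rfl : k = j := by omega
      rw [elA_big (show k < k + 1 by omega)]
      unfold elA
      rw [show (k + 2 + 1 - (k + 1)) / 2 = 1 by omega,
          show (k + 1 + 1 - k) / 2 = 1 by omega,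
          show (k + 2 + (k + 1)) / 2 = k + 1 by omega,
          show (k + 1 + k) / 2 = k by omega,
          Nat.choose_self, Nat.choose_self]
      ring
    · rcases eq_or_lt_of_le (Nat.lt_iff_add_one_le.mp hk) with hk2 | hk2
      · -- k = j + 1
        obtain rfl : k = j + 1 := by omega
        rw [elA_big (show j < j + 2 by omega)]
        unfold elA
        rw [show (j + 2 + 1 - (j + 1 + 1)) / 2 = 0 by omega,
            show (j + 1 + 1 - (j + 1)) / 2 = 0 by omega,
            show (j + 2 + (j + 1 + 1)) / 2 = j + 2 by omega,
            show (j + 1 + (j + 1)) / 2 = j + 1 by omega,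
            Nat.choose_self, Nat.choose_self]
        ring
      · rw [elA_big (show j + 2 < k + 1 by omega), elA_big (show j + 1 < k by omega),
            elA_big (show j < k + 1 by omega)]
        ring

lemma elA_sum (j : ℕ) (x y : ℂ) :
    x ^ (2 * j + 1) + y ^ (2 * j + 1) =
      (x + y) * ∑ k ∈ Finset.range (j + 1),
        (elA j k : ℂ) * (x * y) ^ (j - k) * (x ^ 2 + y ^ 2) ^ k := by
  induction j using Nat.twoStepInduction with
  | zero => norm_num [elA]
  | one =>
      have h0 : elA 1 0 = -1 := by decide
      have h1 : elA 1 1 = 1 := by decide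
      rw [Finset.sum_range_succ, Finset.sum_range_succ, Finset.sum_range_zero, h0, h1]
      push_cast
      ring
  | more j ih1 ih2 =>
      have hrec : x ^ (2 * (j + 2) + 1) + y ^ (2 * (j + 2) + 1) =
          (x ^ 2 + y ^ 2) * (x ^ (2 * (j + 1) + 1) + y ^ (2 * (j + 1) + 1))
            - (x * y) ^ 2 * (x ^ (2 * j + 1) + y ^ (2 * j + 1)) := by ring
      rw [hrec, ih1, ih2]
      suffices hS : ∑ k ∈ Finset.range (j + 2 + 1),
            (elA (j + 2) k : ℂ) * (x * y) ^ (j + 2 - k) * (x ^ 2 + y ^ 2) ^ k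
          = (x ^ 2 + y ^ 2) * ∑ k ∈ Finset.range (j + 1 + 1),
              (elA (j + 1) k : ℂ) * (x * y) ^ (j + 1 - k) * (x ^ 2 + y ^ 2) ^ k
            - (x * y) ^ 2 * ∑ k ∈ Finset.range (j + 1),
              (elA j k : ℂ) * (x * y) ^ (j - k) * (x ^ 2 + y ^ 2) ^ k by
        rw [hS]; ring
      have h1 : ∑ k ∈ Finset.range (j + 2 + 1),
            (elA (j + 2) k : ℂ) * (x * y) ^ (j + 2 - k) * (x ^ 2 + y ^ 2) ^ k
          = (∑ k ∈ Finset.range (j + 2),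
              ((elA (j + 1) k : ℂ) - (elA j (k + 1) : ℂ)) * (x * y) ^ (j + 1 - k)
                * (x ^ 2 + y ^ 2) ^ (k + 1))
            + (-(elA j 0 : ℂ)) * (x * y) ^ (j + 2) := by
        rw [Finset.sum_range_succ']
        congr 1
        · apply Finset.sum_congr rfl
          intro k hk
          have hk' : k < j + 2 := Finset.mem_range.mp hk
          rw [elA_rec, show j + 2 - (k + 1) = j + 1 - k by omega]
          push_cast
          ring
        · rw [elA_zero]
          push_cast
          simp
      have h3 : (x ^ 2 + y ^ 2) * ∑ k ∈ Finset.range (j + 2),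
            (elA (j + 1) k : ℂ) * (x * y) ^ (j + 1 - k) * (x ^ 2 + y ^ 2) ^ k
          = ∑ k ∈ Finset.range (j + 2),
              (elA (j + 1) k : ℂ) * (x * y) ^ (j + 1 - k) * (x ^ 2 + y ^ 2) ^ (k + 1) := by
        rw [Finset.mul_sum]
        apply Finset.sum_congr rfl
        intro k _
        ring
      have h2 : (x * y) ^ 2 * ∑ k ∈ Finset.range (j + 1),
            (elA j k : ℂ) * (x * y) ^ (j - k) * (x ^ 2 + y ^ 2) ^ k
          = (∑ k ∈ Finset.range (j + 2),
              (elA j (k + 1) : ℂ) * (x * y) ^ (j + 1 - k) * (x ^ 2 + y ^ 2) ^ (k + 1))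
            + (elA j 0 : ℂ) * (x * y) ^ (j + 2) := by
        rw [Finset.mul_sum, Finset.sum_range_succ']
        congr 1
        · rw [Finset.sum_range_succ, Finset.sum_range_succ,
              elA_big (show j < j + 1 by omega), elA_big (show j < j + 2 by omega)]
          simp only [Int.cast_zero, zero_mul, add_zero]
          apply Finset.sum_congr rfl
          intro k hk
          have hk' : k < j := Finset.mem_range.mp hk
          rw [show j + 1 - k = (j - (k + 1)) + 2 by omega, pow_add]
          ring
        · simp only [Nat.sub_zero, pow_zero, mul_one]
          rw [show j + 2 = j + 2 from rfl, pow_add]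
          ring
      rw [show j + 1 + 1 = j + 2 from rfl] at *
      rw [h1, h3, h2]
      simp only [sub_mul, Finset.sum_sub_distrib]
      ring

lemma negpow (a b : ℕ) (h : a % 2 = b % 2) : (-1 : ℚ) ^ a = (-1) ^ b := by
  conv_lhs => rw [← Nat.div_add_mod a 2]
  conv_rhs => rw [← Nat.div_add_mod b 2]
  rw [pow_add, pow_add, pow_mul, pow_mul, h]
  norm_num

lemma prodlem (B : ℕ) (a : ℚ) (ha : a = 4 * B + 2) : ∀ j ≤ B,
    ((B - j).factorial : ℚ) * ∏ l ∈ Finset.Icc 1 j, (a ^ 2 - (4 * (l : ℚ) - 2) ^ 2)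
      = 16 ^ j * ((B + j).factorial : ℚ) := by
  intro j
  induction j with
  | zero => intro _; simp
  | succ j ih =>
      intro h
      obtain ⟨d, rfl⟩ : ∃ d, B = j + 1 + d := ⟨B - (j + 1), by omega⟩
      have E := ih (by omega)
      rw [show j + 1 + d - j = d + 1 by omega, Nat.factorial_succ] at E
      rw [Finset.prod_Icc_succ_top (by omega), show j + 1 + d - (j + 1) = d by omega,
          show j + 1 + d + (j + 1) = (j + 1 + d + j) + 1 by omega, Nat.factorial_succ]
      subst ha
      push_cast at E ⊢
      linear_combination (16 * (2 * (j : ℚ) + d + 2)) * E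

/-- The case `n ≡ 5 (mod 8)` of the Eight Levels Theorem. -/
theorem eight_levels_mod8_five (n : ℕ) (hn : n % 8 = 5) (c : ℕ → ℚ)
    (hc : ∀ k ≤ n / 2,
      c k = (-1 : ℚ) ^ (k / 2 + 1) * ((n : ℚ) + 1 - 2 * (k : ℚ)) ^ (k % 2) *
        (∏ l ∈ Finset.Icc 1 (k / 2), (((n : ℚ) + 1) ^ 2 - (4 * (l : ℚ) - 2) ^ 2)) /
        (4 ^ k * (Nat.factorial k : ℚ))) :
    (∀ k ≤ n / 2, ∃ z : ℤ, c k = (z : ℚ)) ∧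
    ∀ x y : ℂ, x ^ n + y ^ n =
      (x + y) * ∑ k ∈ Finset.range (n / 2 + 1),
        (c k : ℂ) * (x * y) ^ (n / 2 - k) * (x ^ 2 + y ^ 2) ^ k := by
  obtain ⟨t, rfl⟩ : ∃ t, n = 8 * t + 5 := ⟨n / 8, by omega⟩
  have hP := prodlem (2 * t + 1) (((8 * t + 5 : ℕ) : ℚ) + 1) (by push_cast; ring)
  have key : ∀ k ≤ 4 * t + 2, c k = ((elA (4 * t + 2) k : ℤ) : ℚ) := by
    intro k hk
    rw [hc k (by omega)]
    rcases Nat.even_or_odd k with ⟨j, hj⟩ | ⟨j, hj⟩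
    · obtain rfl : k = 2 * j := by omega
      have hjB : j ≤ 2 * t + 1 := by omega
      have E := hP j hjB
      rw [show (16 : ℚ) = 4 ^ 2 by norm_num, ← pow_mul] at E
      rw [show 2 * j / 2 = j by omega, show 2 * j % 2 = 0 by omega, pow_zero, mul_one]
      unfold elA
      rw [show (4 * t + 2 + 1 - 2 * j) / 2 = 2 * t + 1 - j by omega,
          show (4 * t + 2 + 2 * j) / 2 = 2 * t + 1 + j by omega]
      push_cast
      rw [negpow (2 * t + 1 - j) (j + 1) (by omega),
          Nat.cast_choose ℚ (show 2 * j ≤ 2 * t + 1 + j by omega),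
          show 2 * t + 1 + j - 2 * j = 2 * t + 1 - j by omega]
      rw [mul_div_assoc]
      congr 1
      have h4 : (4 : ℚ) ^ (2 * j) ≠ 0 := by positivity
      have hf1 : ((2 * j).factorial : ℚ) ≠ 0 := by
        exact_mod_cast (Nat.factorial_ne_zero _)
      have hf2 : (((2 * t + 1 - j).factorial : ℚ)) ≠ 0 := by
        exact_mod_cast (Nat.factorial_ne_zero _)
      push_cast at E
      field_simp
      linear_combination E
    · obtain rfl : k = 2 * j + 1 := by omega
      have hjB : j ≤ 2 * t := by omega
      have E := hP j (by omega)
      rw [show (16 : ℚ) = 4 ^ 2 by norm_num, ← pow_mul,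
          show 2 * t + 1 - j = (2 * t - j) + 1 by omega, Nat.factorial_succ] at E
      rw [show (2 * j + 1) / 2 = j by omega, show (2 * j + 1) % 2 = 1 by omega, pow_one]
      unfold elA
      rw [show (4 * t + 2 + 1 - (2 * j + 1)) / 2 = 2 * t + 1 - j by omega,
          show (4 * t + 2 + (2 * j + 1)) / 2 = 2 * t + 1 + j by omega]
      push_cast
      rw [negpow (2 * t + 1 - j) (j + 1) (by omega),
          Nat.cast_choose ℚ (show 2 * j + 1 ≤ 2 * t + 1 + j by omega),
          show 2 * t + 1 + j - (2 * j + 1) = 2 * t - j by omega]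
      rw [mul_assoc, mul_div_assoc]
      congr 1
      have h4 : (4 : ℚ) ^ (2 * j + 1) ≠ 0 := by positivity
      have hf1 : (((2 * j + 1).factorial : ℚ)) ≠ 0 := by
        exact_mod_cast (Nat.factorial_ne_zero _)
      have hf2 : (((2 * t - j).factorial : ℚ)) ≠ 0 := by
        exact_mod_cast (Nat.factorial_ne_zero _)
      push_cast [Nat.cast_sub hjB] at E
      field_simp
      linear_combination 4 * E
  constructor
  · exact fun k hk => ⟨elA (4 * t + 2) k, key k (by omega)⟩
  · intro x y
    have hm : (8 * t + 5) / 2 = 4 * t + 2 := by omega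
    rw [hm]
    have hsum : ∑ k ∈ Finset.range (4 * t + 2 + 1),
          (c k : ℂ) * (x * y) ^ (4 * t + 2 - k) * (x ^ 2 + y ^ 2) ^ k
        = ∑ k ∈ Finset.range (4 * t + 2 + 1),
          (elA (4 * t + 2) k : ℂ) * (x * y) ^ (4 * t + 2 - k) * (x ^ 2 + y ^ 2) ^ k := by
      apply Finset.sum_congr rfl
      intro k hk
      have hk' : k ≤ 4 * t + 2 := by
        have := Finset.mem_range.mp hk; omega
      rw [key k hk']
      norm_cast
    rw [hsum, show (8 * t + 5 : ℕ) = 2 * (4 * t + 2) + 1 by ring]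
    exact elA_sum (4 * t + 2) x y
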